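/- Let p be a prime, G a finite group, S a Sylow p-subgroup of G, P ≤ S a subgroup, and φ: P → S an injective group homomorphism (not assumed to be induced by conjugation in G). Let Q be a normal subgroup of P and set ψ = φ|_Q. Suppose that there exists g ∈ G with gxg⁻¹ = ψ(x) for all x ∈ Q, and that φ(Q) is fully centralized, i.e. |C_S(φ(Q))| ≥ |C_S(g'φ(Q)g'⁻¹)| for every g' ∈ G with g'φ(Q)g'⁻¹ ≤ S. Then there exists h ∈ G such that hxh⁻¹ = ψ(x) for all x ∈ Q and hPh⁻¹ is contained in the subgroup φ(P)·C_S(φ(Q)) of S. -/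

import Mathlib

open scoped Pointwise

/-- The conjugate `gQg⁻¹` of a subgroup. -/
def conjSub {G : Type} [Group G] (g : G) (Q : Subgroup G) : Subgroup G :=
  Subgroup.map (MulAut.conj g).toMonoidHom Q

lemma mem_conjSub' {G : Type} [Group G] {g x : G} {Q : Subgroup G} :
    x ∈ conjSub g Q ↔ ∃ q ∈ Q, x = g * q * g⁻¹ := by
  simp only [conjSub, Subgroup.mem_map, MulEquiv.coe_toMonoidHom, MulAut.conj_apply]
  constructor
  · rintro ⟨q, hq, rfl⟩; exact ⟨q, hq, rfl⟩
  · rintro ⟨q, hq, rfl⟩; exact ⟨q, hq, rfl⟩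

lemma le_normalizer_of_conj' {G : Type} [Group G] {H N : Subgroup G}
    (h : ∀ a ∈ H, ∀ x ∈ N, a * x * a⁻¹ ∈ N) : H ≤ Subgroup.normalizer (N : Set G) := by
  intro a ha
  rw [Subgroup.mem_normalizer_iff]
  intro x
  constructor
  · exact fun hx => h a ha x hx
  · intro hx
    have h2 := h a⁻¹ (inv_mem ha) _ hx
    have h3 : a⁻¹ * (a * x * a⁻¹) * a⁻¹⁻¹ = x := by group
    rwa [h3] at h2

lemma mem_sup_decomp' {G : Type} [Group G] {H N : Subgroup G}
    (hle : H ≤ Subgroup.normalizer (N : Set G)) {x : G} (hx : x ∈ H ⊔ N) :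
    ∃ a ∈ H, ∃ d ∈ N, x = a * d := by
  let W : Subgroup G :=
  { carrier := {x | ∃ a ∈ H, ∃ d ∈ N, x = a * d}
    one_mem' := ⟨1, one_mem _, 1, one_mem _, by simp⟩
    mul_mem' := by
      rintro x y ⟨a, ha, d, hd, rfl⟩ ⟨a', ha', d', hd', rfl⟩
      refine ⟨a * a', mul_mem ha ha', (a'⁻¹ * d * a') * d', mul_mem ?_ hd', by group⟩
      have := (Subgroup.mem_normalizer_iff.1 (hle (inv_mem ha'))) d
      simpa [mul_assoc] using this.1 hd
    inv_mem' := by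
      rintro x ⟨a, ha, d, hd, rfl⟩
      refine ⟨a⁻¹, inv_mem ha, a * d⁻¹ * a⁻¹, ?_, by group⟩
      exact (Subgroup.mem_normalizer_iff.1 (hle ha) d⁻¹).1 (inv_mem hd) }
  have : H ⊔ N ≤ W := sup_le
    (fun a ha => ⟨a, ha, 1, one_mem _, by simp⟩)
    (fun d hd => ⟨1, one_mem _, d, hd, by simp⟩)
  exact this hx

/-- **Extension lemma (variant of the extension axiom).** Let `S` be a Sylow
`p`-subgroup of the finite group `G`, `P ≤ S`, and `φ : P → S` an injective
homomorphism. Let `Q ⊴ P` and `ψ = φ|_Q`. If `ψ` is realized by conjugation by some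
`g ∈ G` and `φ(Q)` is fully centralized, then there is `h ∈ G` realizing `ψ` by
conjugation with `hPh⁻¹ ⊆ φ(P)·C_S(φ(Q))`. -/
theorem extension_lemma
    (p : ℕ) [Fact p.Prime] (G : Type) [Group G] [Finite G]
    (S : Sylow p G) (P : Subgroup G) (hPS : P ≤ (S : Subgroup G))
    (φ : ↥P →* ↥(S : Subgroup G)) (hφinj : Function.Injective φ)
    (Q : Subgroup G) (hQP : Q ≤ P)
    (hQnormal : ∀ g ∈ P, ∀ x ∈ Q, g * x * g⁻¹ ∈ Q)
    -- the `G`-level homomorphism associated to `φ` and its images `φ(P)` and `φ(Q)`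
    (Φ : ↥P →* G) (hΦ : Φ = ((S : Subgroup G).subtype).comp φ)
    (φP φQ : Subgroup G) (hφP : φP = Subgroup.map Φ ⊤)
    (hφQ : φQ = Subgroup.map Φ (Q.subgroupOf P))
    -- `ψ = φ|_Q` is realized by conjugation by some `g ∈ G`
    (g : G) (hg : ∀ (x : G) (hx : x ∈ Q), g * x * g⁻¹ = Φ ⟨x, hQP hx⟩)
    -- `φ(Q)` is fully centralized
    (hfullcent : ∀ g' : G, (∀ y ∈ φQ, g' * y * g'⁻¹ ∈ (S : Subgroup G)) →
      Nat.card ((S : Subgroup G) ⊓ Subgroup.centralizer ((conjSub g' φQ : Subgroup G) : Set G) : Subgroup G) ≤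
        Nat.card ((S : Subgroup G) ⊓ Subgroup.centralizer ((φQ : Subgroup G) : Set G) : Subgroup G)) :
    ∃ h : G, (∀ (x : G) (hx : x ∈ Q), h * x * h⁻¹ = Φ ⟨x, hQP hx⟩) ∧
      ∀ x ∈ P, h * x * h⁻¹ ∈
        (φP : Set G) * (((S : Subgroup G) ⊓
          Subgroup.centralizer ((φQ : Subgroup G) : Set G) : Subgroup G) : Set G) := by
  classical
  have hΦmem : ∀ y : ↥P, Φ y ∈ (S : Subgroup G) := by
    intro y; rw [hΦ]; exact (φ y).2
  clear hφinj hΦ φ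
  set Ss : Subgroup G := (S : Subgroup G) with hSs
  set D : Subgroup G := Subgroup.centralizer (φQ : Set G) with hD
  set C : Subgroup G := Ss ⊓ D with hC
  -- basic inclusions
  have hφP_le_S : φP ≤ Ss := by
    rw [hφP]
    rintro _ ⟨y, -, rfl⟩
    exact hΦmem y
  have hφQ_le_φP : φQ ≤ φP := by
    rw [hφQ, hφP]; exact Subgroup.map_mono le_top
  have hφQ_le_S : φQ ≤ Ss := hφQ_le_φP.trans hφP_le_S
  have hC_le_S : C ≤ Ss := inf_le_left
  -- membership in φQ
  have hmemφQ : ∀ y : G, y ∈ φQ ↔ ∃ q, ∃ hq : q ∈ Q, y = Φ ⟨q, hQP hq⟩ := by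
    intro y
    rw [hφQ]
    constructor
    · rintro ⟨⟨q, hqP⟩, hq, rfl⟩
      exact ⟨q, Subgroup.mem_subgroupOf.1 hq, rfl⟩
    · rintro ⟨q, hq, rfl⟩
      exact ⟨⟨q, hQP hq⟩, Subgroup.mem_subgroupOf.2 hq, rfl⟩
  -- φP normalizes φQ
  have hφP_norm_φQ : ∀ a ∈ φP, ∀ y ∈ φQ, a * y * a⁻¹ ∈ φQ := by
    intro a ha y hy
    rw [hφP] at ha
    obtain ⟨u, -, rfl⟩ := ha
    obtain ⟨q, hq, rfl⟩ := (hmemφQ y).1 hy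
    rw [hmemφQ]
    refine ⟨(u : G) * q * (u : G)⁻¹, hQnormal (u : G) u.2 q hq, ?_⟩
    rw [← map_inv, ← map_mul, ← map_mul]
    rfl
  -- φP normalizes D
  have hφP_norm_D : ∀ a ∈ φP, ∀ z ∈ D, a * z * a⁻¹ ∈ D := by
    intro a ha z hz
    rw [hD, Subgroup.mem_centralizer_iff] at hz ⊢
    intro y hy
    have h1 : a⁻¹ * y * a⁻¹⁻¹ ∈ φQ := hφP_norm_φQ a⁻¹ (inv_mem ha) y hy
    rw [inv_inv] at h1
    have h2 := hz _ h1
    calc y * (a * z * a⁻¹) = a * ((a⁻¹ * y * a) * z) * a⁻¹ := by group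
      _ = a * (z * (a⁻¹ * y * a)) * a⁻¹ := by rw [h2]
      _ = (a * z * a⁻¹) * y := by group
  -- φP normalizes C
  have hφP_norm_C : ∀ a ∈ φP, ∀ z ∈ C, a * z * a⁻¹ ∈ C := by
    intro a ha z hz
    have hz' := Subgroup.mem_inf.1 hz
    exact Subgroup.mem_inf.2 ⟨mul_mem (mul_mem (hφP_le_S ha) hz'.1) (inv_mem (hφP_le_S ha)),
      hφP_norm_D a ha z hz'.2⟩
  -- C is a maximal p-subgroup of D
  have hCmax : ∀ E : Subgroup G, IsPGroup p E → E ≤ D → C ≤ E → E = C := by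
    intro E hE hED hCE
    have hφQ_p : IsPGroup p φQ := S.isPGroup'.to_le hφQ_le_S
    have hE_norm : E ≤ Subgroup.normalizer φQ := by
      refine le_normalizer_of_conj' ?_
      intro e he y hy
      have := (Subgroup.mem_centralizer_iff.1 (hED he)) y hy
      have h4 : e * y * e⁻¹ = y := by
        rw [← this]; group
      rwa [h4]
    have hF : IsPGroup p (E ⊔ φQ : Subgroup G) := hE.to_sup_of_normal_right' hφQ_p hE_norm
    obtain ⟨S₂, hFS₂⟩ := hF.exists_le_sylow
    obtain ⟨u, huS⟩ := MulAction.exists_smul_eq G S₂ S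
    have hconj : ∀ x ∈ (E ⊔ φQ : Subgroup G), u * x * u⁻¹ ∈ Ss := by
      intro x hx
      have h5 : u * x * u⁻¹ ∈ (u • S₂ : Sylow p G) := by
        have h6 := Subgroup.smul_mem_pointwise_smul x (MulAut.conj u) (S₂ : Subgroup G) (hFS₂ hx)
        rw [Sylow.smul_def]
        have h7 : ((MulAut.conj u • S₂ : Sylow p G) : Subgroup G) = MulAut.conj u • (S₂ : Subgroup G) :=
          Sylow.pointwise_smul_def
        have h8 : u * x * u⁻¹ ∈ MulAut.conj u • (S₂ : Subgroup G) := by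
          simpa [MulAut.smul_def] using h6
        rw [← h7] at h8
        exact h8
      rw [huS] at h5
      exact h5
    have huφQ : ∀ y ∈ φQ, u * y * u⁻¹ ∈ Ss := fun y hy => hconj y ((le_sup_right : φQ ≤ E ⊔ φQ) hy)
    have hcard := hfullcent u huφQ
    have hEconj : conjSub u E ≤ Ss ⊓ Subgroup.centralizer ((conjSub u φQ : Subgroup G) : Set G) := by
      intro x hx
      obtain ⟨e, he, rfl⟩ := mem_conjSub'.1 hx
      refine Subgroup.mem_inf.2 ⟨hconj e ((le_sup_left : E ≤ E ⊔ φQ) he), ?_⟩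
      rw [Subgroup.mem_centralizer_iff]
      intro y hy
      obtain ⟨q, hq, rfl⟩ := mem_conjSub'.1 hy
      have hcomm : q * e = e * q := (Subgroup.mem_centralizer_iff.1 (hED he)) q hq
      calc (u * q * u⁻¹) * (u * e * u⁻¹) = u * (q * e) * u⁻¹ := by group
        _ = u * (e * q) * u⁻¹ := by rw [hcomm]
        _ = (u * e * u⁻¹) * (u * q * u⁻¹) := by group
    have h1 : Nat.card E ≤ Nat.card C := by
      have e1 : Nat.card E = Nat.card (conjSub u E) :=
        Nat.card_congr (Subgroup.equivMapOfInjective E _ (MulAut.conj u).injective).toEquiv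
      rw [e1]
      exact le_trans (Subgroup.card_le_of_le hEconj) hcard
    exact (Subgroup.eq_of_le_of_card_ge hCE h1).symm
    -- the subgroups K = φP ⊔ D and T = φP ⊔ C
  set K : Subgroup G := φP ⊔ D with hK
  set T : Subgroup G := φP ⊔ C with hT
  have hφP_normD' : φP ≤ Subgroup.normalizer (D : Set G) := le_normalizer_of_conj' hφP_norm_D
  have hφP_normC' : φP ≤ Subgroup.normalizer (C : Set G) := le_normalizer_of_conj' hφP_norm_C
  have hT_le_S : T ≤ Ss := sup_le hφP_le_S hC_le_S
  have hT_le_K : T ≤ K := sup_le le_sup_left (le_trans inf_le_right le_sup_right)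
  have hC_le_T : C ≤ T := le_sup_right
  have hφP_le_T : φP ≤ T := le_sup_left
  have hφP_le_K : φP ≤ K := le_sup_left
  have hD_le_K : D ≤ K := le_sup_right
  have hT_p : IsPGroup p T := S.isPGroup'.to_le hT_le_S
  -- decomposition of elements of X = conjSub g P
  have hX_decomp : ∀ q ∈ P, ∃ a ∈ φP, ∃ d ∈ D, g * q * g⁻¹ = a * d := by
    intro q hq
    refine ⟨Φ ⟨q, hq⟩, ?_, (Φ ⟨q, hq⟩)⁻¹ * (g * q * g⁻¹), ?_, by group⟩
    · rw [hφP]; exact ⟨⟨q, hq⟩, trivial, rfl⟩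
    · rw [hD, Subgroup.mem_centralizer_iff]
      intro y hy
      obtain ⟨q₀, hq₀, rfl⟩ := (hmemφQ y).1 hy
      set a : G := Φ ⟨q, hq⟩ with ha
      have e1 : g * q₀ * g⁻¹ = Φ ⟨q₀, hQP hq₀⟩ := hg q₀ hq₀
      have e2 : g * (q * q₀ * q⁻¹) * g⁻¹ = Φ ⟨q * q₀ * q⁻¹, hQP (hQnormal q hq q₀ hq₀)⟩ :=
        hg _ (hQnormal q hq q₀ hq₀)
      have e3 : a * Φ ⟨q₀, hQP hq₀⟩ * a⁻¹ = Φ ⟨q * q₀ * q⁻¹, hQP (hQnormal q hq q₀ hq₀)⟩ := by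
        rw [ha, ← map_inv, ← map_mul, ← map_mul]; rfl
      have e4 : a * (g * q₀ * g⁻¹) * a⁻¹ = g * (q * q₀ * q⁻¹) * g⁻¹ := by
        rw [e1, e3, e2]
      rw [← e1]
      have e5 : a * ((g * q₀ * g⁻¹) * (a⁻¹ * (g * q * g⁻¹)))
          = a * ((a⁻¹ * (g * q * g⁻¹)) * (g * q₀ * g⁻¹)) := by
        calc a * ((g * q₀ * g⁻¹) * (a⁻¹ * (g * q * g⁻¹)))
            = (a * (g * q₀ * g⁻¹) * a⁻¹) * (g * q * g⁻¹) := by group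
          _ = (g * (q * q₀ * q⁻¹) * g⁻¹) * (g * q * g⁻¹) := by rw [e4]
          _ = a * ((a⁻¹ * (g * q * g⁻¹)) * (g * q₀ * g⁻¹)) := by group
      exact mul_left_cancel e5
  have hX_le_K : conjSub g P ≤ K := by
    intro x hx
    obtain ⟨q, hq, rfl⟩ := mem_conjSub'.1 hx
    obtain ⟨a, ha, d, hd, heq⟩ := hX_decomp q hq
    rw [heq]
    exact mul_mem (hφP_le_K ha) (hD_le_K hd)
  have hX_p : IsPGroup p (conjSub g P) := (S.isPGroup'.to_le hPS).map _
  -- T.subgroupOf K is a Sylow p-subgroup of K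
  have hT'_p : IsPGroup p (T.subgroupOf K) := hT_p.comap_subtype
  have hT'_max : ∀ R : Subgroup ↥K, IsPGroup p R → T.subgroupOf K ≤ R → R = T.subgroupOf K := by
    intro R hR hTR
    have hmap : (T.subgroupOf K).map K.subtype = T := by
      rw [Subgroup.subgroupOf_map_subtype, inf_eq_left.2 hT_le_K]
    have hTmap : T ≤ R.map K.subtype := by
      rw [← hmap]; exact Subgroup.map_mono hTR
    have hRmap_p : IsPGroup p (R.map K.subtype) := hR.map _
    have hR₀ : R.map K.subtype ≤ T := by
      intro r hr
      have hrK : r ∈ K := by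
        obtain ⟨⟨r', hr'⟩, -, rfl⟩ := hr
        exact hr'
      obtain ⟨a, ha, d, hd, heq⟩ := mem_sup_decomp' hφP_normD' hrK
      have hdRD : d ∈ (R.map K.subtype) ⊓ D := by
        refine Subgroup.mem_inf.2 ⟨?_, hd⟩
        have hdr : d = a⁻¹ * r := by rw [heq]; group
        rw [hdr]
        exact mul_mem (inv_mem (hTmap (hφP_le_T ha))) hr
      have hEC : (R.map K.subtype) ⊓ D = C :=
        hCmax _ (hRmap_p.to_le inf_le_left) inf_le_right
          (le_inf (le_trans hC_le_T hTmap) inf_le_right)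
      rw [heq]
      exact mul_mem (hφP_le_T ha) (hC_le_T (hEC ▸ hdRD))
    have hRT : R.map K.subtype = T := le_antisymm hR₀ hTmap
    apply Subgroup.map_injective K.subtype_injective
    rw [hRT, hmap]
  let Tsyl : Sylow p ↥K := ⟨T.subgroupOf K, hT'_p, fun {R} hR hTR => hT'_max R hR hTR⟩
  have hX'_p : IsPGroup p ((conjSub g P).subgroupOf K) := hX_p.comap_subtype
  obtain ⟨R, hXR⟩ := hX'_p.exists_le_sylow
  obtain ⟨k, hk⟩ := MulAction.exists_smul_eq ↥K R Tsyl
  have hconjT : ∀ x : G, x ∈ conjSub g P → (k : G) * x * (k : G)⁻¹ ∈ T := by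
    intro x hx
    have hxK : x ∈ K := hX_le_K hx
    have hx' : (⟨x, hxK⟩ : ↥K) ∈ (R : Subgroup ↥K) := hXR (Subgroup.mem_subgroupOf.2 hx)
    have h6 := Subgroup.smul_mem_pointwise_smul _ (MulAut.conj k) (R : Subgroup ↥K) hx'
    have h7 : MulAut.conj k • (R : Subgroup ↥K) = T.subgroupOf K := by
      have h7a : ((k • R : Sylow p ↥K) : Subgroup ↥K) = MulAut.conj k • (R : Subgroup ↥K) := by
        rw [Sylow.smul_def]; exact Sylow.pointwise_smul_def
      rw [← h7a, hk]
    rw [h7] at h6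
    have h8 : ((k * ⟨x, hxK⟩ * k⁻¹ : ↥K) : G) ∈ T :=
      Subgroup.mem_subgroupOf.1 (by simpa [MulAut.smul_def] using h6)
    simpa using h8
  obtain ⟨a, ha, d, hd, hkeq⟩ := mem_sup_decomp' hφP_normD' (k : ↥K).2
  refine ⟨d * g, ?_, ?_⟩
  · intro x hx
    have e1 : g * x * g⁻¹ = Φ ⟨x, hQP hx⟩ := hg x hx
    have hmem : Φ ⟨x, hQP hx⟩ ∈ φQ := (hmemφQ _).2 ⟨x, hx, rfl⟩
    have hd' : d ∈ Subgroup.centralizer (φQ : Set G) := hd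
    have hcomm := Subgroup.mem_centralizer_iff.1 hd' _ hmem
    calc (d * g) * x * (d * g)⁻¹ = d * (g * x * g⁻¹) * d⁻¹ := by group
      _ = d * Φ ⟨x, hQP hx⟩ * d⁻¹ := by rw [e1]
      _ = Φ ⟨x, hQP hx⟩ := by rw [← hcomm]; group
  · intro x hx
    have hxX : g * x * g⁻¹ ∈ conjSub g P := mem_conjSub'.2 ⟨x, hx, rfl⟩
    have ht := hconjT _ hxX
    obtain ⟨b, hb, c, hc, hteq⟩ := mem_sup_decomp' hφP_normC' ht
    have hka : (k : G) = a * d := hkeq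
    have e2 : (d * g) * x * (d * g)⁻¹ = (a⁻¹ * b * a) * (a⁻¹ * c * a) := by
      calc (d * g) * x * (d * g)⁻¹ = d * (g * x * g⁻¹) * d⁻¹ := by group
        _ = a⁻¹ * ((a * d) * (g * x * g⁻¹) * (a * d)⁻¹) * a := by group
        _ = a⁻¹ * ((k : G) * (g * x * g⁻¹) * (k : G)⁻¹) * a := by rw [hka]
        _ = a⁻¹ * (b * c) * a := by rw [hteq]
        _ = (a⁻¹ * b * a) * (a⁻¹ * c * a) := by group
    rw [e2]
    have hba : a⁻¹ * b * a ∈ φP := mul_mem (mul_mem (inv_mem ha) hb) ha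
    have hca : a⁻¹ * c * a ∈ C := by
      have h9 := hφP_norm_C a⁻¹ (inv_mem ha) c hc
      rwa [inv_inv] at h9
    exact Set.mul_mem_mul hba hca
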